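/- Fix 0 < p < 1/2 and let k = ⌊pn⌋. Let J ⊆ [n] and w ∈ {0,1}^J. With f : binom([n],k) → [0,1] and g defined from f as in the Up Lemma (g(x) = binom(|x|,k)^{-1} Σ_{x' ⊆ x, |x'|=k} f(x') for |x| ≥ k, else 0), define V_w(g) = Σ_{x ∈ {0,1}^{[n]∖J}} g(w,x)·μ_p(w,x) and V_w(f) = Σ_{x : |x| = k − |w|} f(w,x)/binom(n,k), where μ_p is the p-biased product measure on {0,1}^n. Then for all sufficiently large n (depending on p and |J|), V_w(f) ≤ 5·V_w(g). -/

import Mathlib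

open Finset

set_option maxHeartbeats 2000000

/-! ### Auxiliary: binomial probability weights -/

noncomputable def Bw (n : ℕ) (p : ℝ) (ν : ℕ) : ℝ := (n.choose ν : ℝ) * p ^ ν * (1 - p) ^ (n - ν)

lemma Bw_nonneg {n : ℕ} {p : ℝ} (h0 : 0 ≤ p) (h1 : p ≤ 1) (ν : ℕ) : 0 ≤ Bw n p ν := by
  have h2 : (0:ℝ) ≤ 1 - p := by linarith
  unfold Bw; positivity

lemma Bw_sum (n : ℕ) (p : ℝ) : ∑ ν ∈ range (n + 1), Bw n p ν = 1 := by
  have h := add_pow p (1 - p) n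
  simp only [add_sub_cancel, one_pow] at h
  calc ∑ ν ∈ range (n + 1), Bw n p ν
      = ∑ m ∈ range (n + 1), p ^ m * (1 - p) ^ (n - m) * (n.choose m : ℝ) :=
        Finset.sum_congr rfl fun ν _ => by simp [Bw]; ring
    _ = 1 := h.symm

lemma Bw_var (n : ℕ) (p : ℝ) :
    ∑ ν ∈ range (n + 1), ((n : ℝ) * p - ν) ^ 2 * Bw n p ν = n * p * (1 - p) := by
  have h := bernsteinPolynomial.variance ℝ n
  have h2 := congrArg (Polynomial.eval p) h
  simpa [Polynomial.eval_finset_sum, bernsteinPolynomial, Bw, mul_comm, mul_assoc,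
    mul_left_comm] using h2

lemma Bw_succ {n m : ℕ} (p : ℝ) (h : m < n) :
    Bw n p (m + 1) * ((m + 1 : ℝ) * (1 - p)) = Bw n p m * ((n - m : ℕ) * p) := by
  have hc : ((n.choose (m+1) : ℝ)) * (m + 1) = (n.choose m : ℝ) * ((n - m : ℕ)) := by
    exact_mod_cast congrArg (Nat.cast (R := ℝ)) (Nat.choose_succ_right_eq n m)
  have hq : (1-p)^(n-m) = (1-p)^(n-(m+1))*(1-p) := by
    rw [show n - m = (n - (m+1)) + 1 by omega, pow_succ]
  simp only [Bw, hq, pow_succ]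
  linear_combination ((1 - p) * (p ^ m * p) * (1 - p) ^ (n - (m+1))) * hc

/-! ### The Chebyshev bound -/

lemma cheb {p : ℝ} {n k t : ℕ} (hp0 : 0 < p) (hp : p ≤ 1/2)
    (hk1 : (k:ℝ) ≤ p*n) (hk2 : p*n < (k:ℝ)+1) (htk : t ≤ k) (hkt : k + t ≤ n) (ht : 1 ≤ t) :
    ∑ ν ∈ (range (n+1)).filter (fun ν => ¬(k - t ≤ ν ∧ ν ≤ k + t)), Bw n p ν
      ≤ (n:ℝ) * p * (1-p) / ((t:ℝ)^2) := by
  have ht0 : (0:ℝ) < (t:ℝ) := by exact_mod_cast ht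
  have step : ∀ ν ∈ (range (n+1)).filter (fun ν => ¬(k - t ≤ ν ∧ ν ≤ k + t)),
      Bw n p ν ≤ ((n:ℝ)*p - ν)^2 * Bw n p ν / (t:ℝ)^2 := by
    intro ν hν
    simp only [mem_filter, mem_range, not_and, not_le] at hν
    have hB := Bw_nonneg hp0.le (by linarith) (n := n) ν
    have hsq : (t:ℝ)^2 ≤ ((n:ℝ)*p - ν)^2 := by
      rcases lt_or_ge ν (k - t) with h | h
      · have hν' : (ν:ℝ) ≤ (k:ℝ) - t - 1 := by
          have : ν + t + 1 ≤ k := by omega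
          have := (Nat.cast_le (α := ℝ)).mpr this
          push_cast at this; linarith
        have h1 : (t:ℝ) ≤ (n:ℝ)*p - ν := by nlinarith
        nlinarith
      · have h2 : k + t < ν := hν.2 h
        have hν' : (k:ℝ) + t + 1 ≤ (ν:ℝ) := by
          have := (Nat.cast_le (α := ℝ)).mpr (show k + t + 1 ≤ ν by omega)
          push_cast at this; linarith
        have h1 : (t:ℝ) ≤ (ν:ℝ) - (n:ℝ)*p := by nlinarith
        nlinarith
    rw [le_div_iff₀ (by positivity : (0:ℝ) < (t:ℝ)^2)]
    nlinarith
  calc ∑ ν ∈ (range (n+1)).filter (fun ν => ¬(k - t ≤ ν ∧ ν ≤ k + t)), Bw n p ν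
      ≤ ∑ ν ∈ (range (n+1)).filter (fun ν => ¬(k - t ≤ ν ∧ ν ≤ k + t)),
          ((n:ℝ)*p - ν)^2 * Bw n p ν / (t:ℝ)^2 := Finset.sum_le_sum step
    _ ≤ ∑ ν ∈ range (n+1), ((n:ℝ)*p - ν)^2 * Bw n p ν / (t:ℝ)^2 := by
        apply Finset.sum_le_sum_of_subset_of_nonneg (Finset.filter_subset _ _)
        intro ν _ _
        have hB := Bw_nonneg hp0.le (by linarith) (n := n) ν
        positivity
    _ = (∑ ν ∈ range (n+1), ((n:ℝ)*p - ν)^2 * Bw n p ν) / (t:ℝ)^2 := by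
        rw [← Finset.sum_div]
    _ = (n:ℝ) * p * (1-p) / ((t:ℝ)^2) := by rw [Bw_var]

/-! ### The pairing inequality -/

lemma pair_star {p q N K I T C₀ : ℝ} (hp0 : 0 < p) (hpq : p ≤ q) (hq : q = 1 - p)
    (hC : C₀ = 4 / (p * q^2))
    (hK1 : K ≤ p * N) (hK2 : p * N < K + 1) (hI0 : 0 ≤ I) (hIT : I + 1 ≤ T)
    (hTK : 2 * T + 2 ≤ K) :
    (1 - C₀ / N) * ((K - I) * (K + I + 1)) * q^2 ≤
      ((N - K - I) * (N - K + I + 1)) * p^2 := by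
  have hq0 : 0 < q := lt_of_lt_of_le hp0 hpq
  have hθ0 : 0 ≤ p * N - K := by linarith
  have hθ1 : p * N - K < 1 := by linarith
  have hN0 : 0 < N := by nlinarith
  have hC0 : 0 < C₀ := by rw [hC]; positivity
  have hQ : 0 ≤ p^2*((p*N-K)-I)*((p*N-K)+I+1) + q^2*(I+1-(p*N-K))*((p*N-K)+I) := by
    rcases le_or_gt (p*N-K) I with h | h
    · have h2 : 0 ≤ (q^2 - p^2) * ((I - (p*N-K))*((p*N-K)+I+1)) :=
        mul_nonneg (by nlinarith) (mul_nonneg (by linarith) (by linarith))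
      nlinarith [mul_nonneg (mul_nonneg hq0.le hq0.le) hθ0]
    · have h2 : 0 ≤ p^2*((p*N-K)-I)*((p*N-K)+I+1) :=
        mul_nonneg (mul_nonneg (by positivity) (by linarith)) (by linarith)
      have h3 : 0 ≤ q^2*(I+1-(p*N-K))*((p*N-K)+I) :=
        mul_nonneg (mul_nonneg (by positivity) (by linarith)) (by linarith)
      linarith
  have hmain : ((N - K - I) * (N - K + I + 1)) * p^2 - ((K - I) * (K + I + 1)) * q^2
      ≥ - (p * q * N) := by
    have hid : ((N - K - I) * (N - K + I + 1)) * p^2 - ((K - I) * (K + I + 1)) * q^2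
        = p*q*N*(2*(p*N-K) - (q - p)) +
          (p^2*((p*N-K)-I)*((p*N-K)+I+1) + q^2*(I+1-(p*N-K))*((p*N-K)+I)) := by
      rw [hq]; ring
    have h4 : p*q*N*(2*(p*N-K) - (q-p)) ≥ -(p*q*N) := by
      have h5 : 0 < p*q*N := by positivity
      have h6 : q - p ≤ 1 := by nlinarith
      nlinarith
    linarith [hid.ge, hid.le]
  have hB : (K - I) * (K + I + 1) ≥ p^2 * N^2 / 2 := by
    have h1 : K - I ≥ p*N/2 := by nlinarith
    have h2 : K + I + 1 ≥ p*N := by nlinarith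
    have h3 : 0 ≤ p * N := by positivity
    nlinarith
  have hcomp : (C₀/N) * (((K-I)*(K+I+1)) * q^2) ≥ p * q * N := by
    have e1 : (C₀/N) * ((p^2*N^2/2) * q^2) = 2 * p * N := by
      rw [hC]; field_simp; ring
    have h8 : (0:ℝ) < C₀/N := by positivity
    have h7 := mul_le_mul_of_nonneg_left
      (show (p^2*N^2/2)*q^2 ≤ ((K-I)*(K+I+1))*q^2 by nlinarith) h8.le
    have h9 : p*q*N ≤ 2*p*N := by nlinarith
    linarith
  have hexp : (1 - C₀ / N) * ((K - I) * (K + I + 1)) * q^2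
      = ((K-I)*(K+I+1))*q^2 - (C₀/N) * (((K-I)*(K+I+1)) * q^2) := by ring
  rw [hexp]
  linarith [hmain, hcomp]

lemma Bw_pair {p : ℝ} {n k t : ℕ} (hp0 : 0 < p) (hp : p ≤ 1/2)
    (hk1 : (k:ℝ) ≤ p*n) (hk2 : p*n < (k:ℝ)+1)
    (h2t : 2*t + 2 ≤ k) (hkt : k + t ≤ n) (hCn : 4/(p*(1-p)^2) ≤ (n:ℝ)) :
    ∀ i, i ≤ t → (1 - (4/(p*(1-p)^2))/(n:ℝ))^i * Bw n p (k - i) ≤ Bw n p (k + i) := by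
  have hq0 : (0:ℝ) < 1 - p := by linarith
  have hn0 : (0:ℝ) < n := by
    rcases Nat.eq_zero_or_pos n with h | h
    · exfalso; rw [h] at hk2; simp at hk2; omega
    · exact_mod_cast h
  have hα0 : 0 ≤ 1 - (4/(p*(1-p)^2))/(n:ℝ) := by
    rw [sub_nonneg, div_le_one hn0]; exact hCn
  have hα1 : 1 - (4/(p*(1-p)^2))/(n:ℝ) ≤ 1 := by
    have : 0 < (4/(p*(1-p)^2))/(n:ℝ) := by positivity
    linarith
  intro i
  induction i with
  | zero => intro _; simp
  | succ i IH =>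
    intro hit
    have IH' := IH (by omega)
    set α := 1 - (4/(p*(1-p)^2))/(n:ℝ) with hαdef
    have e1 := Bw_succ (n := n) (m := k + i) p (by omega)
    have e2 := Bw_succ (n := n) (m := k - (i+1)) p (by omega)
    rw [show k - (i+1) + 1 = k - i by omega] at e2
    have c1 : ((k+i:ℕ):ℝ) + 1 = (k:ℝ) + i + 1 := by push_cast; ring
    have c2 : ((n-(k+i):ℕ):ℝ) = (n:ℝ) - k - i := by
      rw [Nat.cast_sub (by omega)]; push_cast; ring
    have c3 : ((k-(i+1):ℕ):ℝ) + 1 = (k:ℝ) - i := by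
      rw [Nat.cast_sub (by omega)]; push_cast; ring
    have c4 : ((n-(k-(i+1)):ℕ):ℝ) = (n:ℝ) - k + i + 1 := by
      rw [Nat.cast_sub (by omega), Nat.cast_sub (by omega)]; push_cast; ring
    rw [c1, c2] at e1
    rw [c3, c4] at e2
    have star := pair_star (p := p) (q := 1-p) (N := (n:ℝ)) (K := (k:ℝ)) (I := (i:ℝ))
      (T := (t:ℝ)) (C₀ := 4/(p*(1-p)^2)) hp0 (by linarith) rfl rfl hk1 hk2
      (Nat.cast_nonneg i) (by exact_mod_cast Nat.cast_le.mpr hit : (i:ℝ)+1 ≤ (t:ℝ)) ?_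
    swap
    · have : ((2*t+2:ℕ):ℝ) ≤ (k:ℝ) := Nat.cast_le.mpr h2t
      push_cast at this; linarith
    have hb' : 0 ≤ Bw n p (k - (i+1)) := Bw_nonneg hp0.le (by linarith) _
    have ha : 0 ≤ Bw n p (k + i) := Bw_nonneg hp0.le (by linarith) _
    have hD : (0:ℝ) < (((n:ℝ) - k + i + 1)*p) * (((k:ℝ)+i+1)*(1-p)) := by
      have h1 : (0:ℝ) < (n:ℝ) - k + i + 1 := by
        have h0 : (k:ℝ) ≤ n := by exact_mod_cast Nat.cast_le.mpr (by omega : k ≤ n)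
        have h0' : (0:ℝ) ≤ i := Nat.cast_nonneg i
        linarith
      have h2 : (0:ℝ) < (k:ℝ)+i+1 := by positivity
      positivity
    have key : α^(i+1) * Bw n p (k-(i+1)) * ((((n:ℝ)-k+i+1)*p) * (((k:ℝ)+i+1)*(1-p)))
        ≤ Bw n p (k+(i+1)) * ((((n:ℝ)-k+i+1)*p) * (((k:ℝ)+i+1)*(1-p))) := by
      calc α^(i+1) * Bw n p (k-(i+1)) * ((((n:ℝ)-k+i+1)*p) * (((k:ℝ)+i+1)*(1-p)))
          = (α^i * (Bw n p (k-(i+1)) * (((n:ℝ)-k+i+1)*p))) * (α * (((k:ℝ)+i+1)*(1-p))) := by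
            ring
        _ = (α^i * (Bw n p (k-i) * (((k:ℝ)-i)*(1-p)))) * (α * (((k:ℝ)+i+1)*(1-p))) := by
            rw [e2]
        _ = (α^i * Bw n p (k-i)) * (α * (((k:ℝ)-i)*((k:ℝ)+i+1)) * (1-p)^2) := by ring
        _ ≤ Bw n p (k+i) * ((((n:ℝ)-k-i)*((n:ℝ)-k+i+1)) * p^2) := by
            apply mul_le_mul IH' star _ ha
            have hki : (0:ℝ) ≤ (k:ℝ) - i := by
              have : ((i:ℕ):ℝ) ≤ (k:ℝ) := Nat.cast_le.mpr (by omega)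
              linarith
            have hki2 : (0:ℝ) ≤ (k:ℝ) + i + 1 := by positivity
            positivity
        _ = (Bw n p (k+i) * (((n:ℝ)-k-i)*p)) * (((n:ℝ)-k+i+1)*p) := by ring
        _ = (Bw n p ((k+i)+1) * (((k:ℝ)+i+1)*(1-p))) * (((n:ℝ)-k+i+1)*p) := by rw [e1]
        _ = Bw n p (k+(i+1)) * ((((n:ℝ)-k+i+1)*p) * (((k:ℝ)+i+1)*(1-p))) := by
            rw [show k + (i+1) = (k+i)+1 by omega]; ring
    exact le_of_mul_le_mul_right key hD

/-! ### Lower bound for the upper central binomial mass -/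

lemma Splus_ge {p : ℝ} {n k t : ℕ} (hp0 : 0 < p) (hp : p ≤ 1/2)
    (hk1 : (k:ℝ) ≤ p*n) (hk2 : p*n < (k:ℝ)+1)
    (h2t : 2*t+2 ≤ k) (hkt : k+t ≤ n)
    (hCt : (4/(p*(1-p)^2)) * (t:ℝ) ≤ (n:ℝ)/10)
    (ht2 : 3*n ≤ t*t) :
    (2:ℝ)/5 ≤ ∑ i ∈ range (t+1), Bw n p (k+i) := by
  have hq0 : (0:ℝ) < 1 - p := by linarith
  have hkn : k ≤ n := by omega
  have hn1 : 1 ≤ n := by omega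
  have ht1 : 1 ≤ t := by nlinarith [ht2, hn1]
  have hn0 : (0:ℝ) < n := by exact_mod_cast hn1
  have ht0 : (0:ℝ) < t := by exact_mod_cast ht1
  have hC0 : (0:ℝ) < 4/(p*(1-p)^2) := by positivity
  have ht1' : (1:ℝ) ≤ (t:ℝ) := by exact_mod_cast ht1
  have hCn : 4/(p*(1-p)^2) ≤ (n:ℝ) := by
    nlinarith [mul_le_mul_of_nonneg_left ht1' hC0.le]
  set C₀ : ℝ := 4/(p*(1-p)^2) with hC₀def
  set α : ℝ := 1 - C₀/(n:ℝ) with hαdef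
  have hα0 : 0 ≤ α := by rw [hαdef, sub_nonneg, div_le_one hn0]; exact hCn
  have hα1 : α ≤ 1 := by rw [hαdef]; nlinarith [div_pos hC0 hn0]
  have hαt : (9:ℝ)/10 ≤ α^t := by
    have h1 : -2 ≤ -(C₀/(n:ℝ)) := by
      have : C₀/(n:ℝ) ≤ 1 := by rw [div_le_one hn0]; exact hCn
      linarith
    have h2 := one_add_mul_le_pow h1 t
    have h3 : (1:ℝ) + (t:ℝ) * (-(C₀/(n:ℝ))) = 1 - (t:ℝ)*C₀/(n:ℝ) := by ring
    have h4 : (1:ℝ) + -(C₀/(n:ℝ)) = α := by rw [hαdef]; ring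
    rw [h3, h4] at h2
    have h5 : (t:ℝ)*C₀/(n:ℝ) ≤ 1/10 := by
      rw [div_le_iff₀ hn0]
      calc (t:ℝ)*C₀ = C₀*(t:ℝ) := by ring
        _ ≤ (n:ℝ)/10 := hCt
        _ = 1/10*(n:ℝ) := by ring
    linarith
  set Spl : ℝ := ∑ i ∈ range (t+1), Bw n p (k+i) with hSpl
  set Smin : ℝ := ∑ i ∈ range t, Bw n p (k-t+i) with hSmin
  have hSpl0 : 0 ≤ Spl := Finset.sum_nonneg fun i _ => Bw_nonneg hp0.le (by linarith) _
  have hSmin0 : 0 ≤ Smin := Finset.sum_nonneg fun i _ => Bw_nonneg hp0.le (by linarith) _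
  have hpair : α^t * Smin ≤ Spl := by
    have key : ∀ i ∈ range t, α^t * Bw n p (k-t+i) ≤ Bw n p (k+(t-i)) := by
      intro i hi
      rw [mem_range] at hi
      have hdt : t - i ≤ t := by omega
      have h6 := Bw_pair hp0 hp hk1 hk2 h2t hkt hCn (t-i) hdt
      rw [show k - (t-i) = k - t + i by omega] at h6
      calc α^t * Bw n p (k-t+i) ≤ α^(t-i) * Bw n p (k-t+i) := by
            apply mul_le_mul_of_nonneg_right _ (Bw_nonneg hp0.le (by linarith) _)
            exact pow_le_pow_of_le_one hα0 hα1 hdt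
        _ ≤ Bw n p (k+(t-i)) := h6
    calc α^t * Smin = ∑ i ∈ range t, α^t * Bw n p (k-t+i) := by
          rw [hSmin, Finset.mul_sum]
      _ ≤ ∑ i ∈ range t, Bw n p (k+(t-i)) := Finset.sum_le_sum key
      _ = ∑ i ∈ range t, Bw n p (k+(i+1)) := by
          rw [← Finset.sum_range_reflect]
          apply Finset.sum_congr rfl
          intro i hi
          rw [mem_range] at hi
          congr 1
          omega
      _ ≤ Spl := by
          rw [hSpl, Finset.sum_range_succ']
          have : 0 ≤ Bw n p (k+0) := Bw_nonneg hp0.le (by linarith) _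
          linarith
  have hwin : 1 - 1/12 ≤ Smin + Spl := by
    have hsplit := Finset.sum_filter_add_sum_filter_not (range (n+1))
      (fun ν => k - t ≤ ν ∧ ν ≤ k + t) (Bw n p)
    rw [Bw_sum] at hsplit
    have hmid : ∑ ν ∈ (range (n+1)).filter (fun ν => k - t ≤ ν ∧ ν ≤ k + t), Bw n p ν
        = Smin + Spl := by
      have hbij : ∑ ν ∈ (range (n+1)).filter (fun ν => k - t ≤ ν ∧ ν ≤ k + t), Bw n p ν
          = ∑ i ∈ range (t+(t+1)), Bw n p (k-t+i) := by
        apply Finset.sum_nbij' (fun ν => ν - (k-t)) (fun i => k-t+i)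
        · intro ν hν; simp only [mem_filter, mem_range] at hν ⊢; omega
        · intro i hi; simp only [mem_filter, mem_range] at hi ⊢; omega
        · intro ν hν; simp only [mem_filter, mem_range] at hν; omega
        · intro i hi; simp only [mem_filter, mem_range] at hi; omega
        · intro ν hν; simp only [mem_filter, mem_range] at hν
          congr 1; omega
      rw [hbij, Finset.sum_range_add]
      congr 1
      apply Finset.sum_congr rfl
      intro i _
      congr 1
      omega
    have hrest := cheb hp0 hp hk1 hk2 (by omega) hkt ht1
    have hrest2 : (n:ℝ)*p*(1-p)/(t:ℝ)^2 ≤ 1/12 := by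
      have h7 : (n:ℝ)*p*(1-p) ≤ (n:ℝ)/4 := by
        have h7a : p*(1-p) ≤ 1/4 := by nlinarith [sq_nonneg (1-2*p)]
        nlinarith [mul_le_mul_of_nonneg_left h7a hn0.le]
      have h8 : 3*(n:ℝ) ≤ (t:ℝ)^2 := by
        have := (Nat.cast_le (α := ℝ)).mpr ht2
        push_cast at this; nlinarith
      rw [div_le_div_iff₀ (by positivity) (by norm_num)]
      nlinarith
    rw [hmid] at hsplit
    linarith
  nlinarith [hpair, hwin, hαt, hα1, hSmin0, hSpl0, mul_le_mul_of_nonneg_right hα1 hSmin0]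

/-! ### Ratio of binomial coefficients -/

lemma choose_ratio {M m t : ℕ} (hmM : m ≤ M) (htm : t ≤ m)
    (hgap : 2*(M-m)*t ≤ M - t) :
    ∀ i ≤ t, (M.choose i : ℝ) ≤ 2 * m.choose i := by
  rcases eq_or_lt_of_le hmM with h | h
  · intro i _
    rw [← h]
    have h0 : (0:ℝ) ≤ (m.choose i : ℝ) := Nat.cast_nonneg _
    linarith
  · have hMt : t < M := lt_of_le_of_lt htm h
    have hMt0 : (0:ℝ) < (M:ℝ) - t := by
      have := (Nat.cast_lt (α := ℝ)).mpr hMt; linarith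
    set γ : ℝ := ((m:ℝ) - t)/((M:ℝ) - t) with hγdef
    have htm' : (t:ℝ) ≤ m := by exact_mod_cast htm
    have hmM' : (m:ℝ) ≤ M := by exact_mod_cast hmM
    have hγ0 : 0 ≤ γ := by apply div_nonneg (by linarith) hMt0.le
    have hγ1 : γ ≤ 1 := by rw [div_le_one hMt0]; linarith
    have claim : ∀ i, i ≤ t → (M.choose i : ℝ) * γ^i ≤ m.choose i := by
      intro i
      induction i with
      | zero => intro _; simp
      | succ i IH =>
        intro hit
        have IH' := IH (by omega)
        have hiM : i ≤ M := by omega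
        have him : i ≤ m := by omega
        have cM : (M.choose (i+1) : ℝ) * (i+1) = (M.choose i : ℝ) * ((M - i : ℕ)) := by
          exact_mod_cast congrArg (Nat.cast (R := ℝ)) (Nat.choose_succ_right_eq M i)
        have cm : (m.choose (i+1) : ℝ) * (i+1) = (m.choose i : ℝ) * ((m - i : ℕ)) := by
          exact_mod_cast congrArg (Nat.cast (R := ℝ)) (Nat.choose_succ_right_eq m i)
        have cMi : ((M - i : ℕ) : ℝ) = (M:ℝ) - i := by
          rw [Nat.cast_sub hiM]
        have cmi : ((m - i : ℕ) : ℝ) = (m:ℝ) - i := by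
          rw [Nat.cast_sub him]
        rw [cMi] at cM; rw [cmi] at cm
        have hkey : ((M:ℝ) - i) * γ ≤ (m:ℝ) - i := by
          rw [hγdef, mul_comm, div_mul_eq_mul_div, div_le_iff₀ hMt0]
          have hi' : (i:ℝ) ≤ t := by exact_mod_cast (by omega : i ≤ t)
          nlinarith [mul_le_mul_of_nonneg_right
            (show (i:ℝ) ≤ t from hi') (show (0:ℝ) ≤ (M:ℝ) - m by linarith)]
        have hpos : (0:ℝ) < (i:ℝ) + 1 := by positivity
        have hMi0 : (0:ℝ) ≤ (M:ℝ) - i := by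
          have := (Nat.cast_le (α := ℝ)).mpr hiM; linarith
        have step : (M.choose (i+1) : ℝ) * γ^(i+1) * ((i:ℝ)+1)
            ≤ (m.choose (i+1) : ℝ) * ((i:ℝ)+1) := by
          calc (M.choose (i+1) : ℝ) * γ^(i+1) * ((i:ℝ)+1)
              = ((M.choose (i+1) : ℝ) * ((i:ℝ)+1)) * γ^i * γ := by ring
            _ = ((M.choose i : ℝ) * γ^i) * (((M:ℝ) - i) * γ) := by rw [cM]; ring
            _ ≤ (m.choose i : ℝ) * (((M:ℝ) - i) * γ) := by
                apply mul_le_mul_of_nonneg_right IH' (mul_nonneg hMi0 hγ0)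
            _ ≤ (m.choose i : ℝ) * ((m:ℝ) - i) := by
                apply mul_le_mul_of_nonneg_left hkey (by positivity)
            _ = (m.choose (i+1) : ℝ) * ((i:ℝ)+1) := cm.symm
        exact le_of_mul_le_mul_right step hpos
    intro i hi
    have hγt : (1:ℝ)/2 ≤ γ^t := by
      have hδ : γ = 1 + (-(((M:ℝ)-m)/((M:ℝ)-t))) := by
        rw [hγdef]; field_simp; ring
      have hδ1 : ((M:ℝ)-m)/((M:ℝ)-t) ≤ 1 := by
        rw [div_le_one hMt0]; linarith
      have h2 := one_add_mul_le_pow (a := -(((M:ℝ)-m)/((M:ℝ)-t))) (by linarith) t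
      rw [← hδ] at h2
      have h3 : (t:ℝ) * (((M:ℝ)-m)/((M:ℝ)-t)) ≤ 1/2 := by
        rw [← mul_div_assoc, div_le_iff₀ hMt0]
        have hcast := (Nat.cast_le (α := ℝ)).mpr hgap
        have e1 : ((2*(M-m)*t : ℕ) : ℝ) = 2*((M:ℝ)-m)*t := by
          rw [Nat.cast_mul, Nat.cast_mul, Nat.cast_sub hmM]; push_cast; ring
        have e2 : ((M - t : ℕ) : ℝ) = (M:ℝ) - t := by rw [Nat.cast_sub (by omega)]
        rw [e1, e2] at hcast
        nlinarith
      nlinarith [h2]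
    have h4 := claim i hi
    have h5 : (M.choose i : ℝ) * γ^t ≤ (M.choose i : ℝ) * γ^i := by
      apply mul_le_mul_of_nonneg_left (pow_le_pow_of_le_one hγ0 hγ1 hi) (by positivity)
    nlinarith [h4, h5, show (0:ℝ) ≤ (M.choose i : ℝ) by positivity]

/-! ### The weight bound -/

lemma W_ge {p : ℝ} {n k t m : ℕ} (hp0 : 0 < p) (hp : p ≤ 1/2)
    (hk1 : (k:ℝ) ≤ p*n) (hk2 : p*n < (k:ℝ)+1)
    (h2t : 2*t+2 ≤ k) (hkt : k+t ≤ n)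
    (hCt : (4/(p*(1-p)^2)) * (t:ℝ) ≤ (n:ℝ)/10)
    (ht2 : 3*n ≤ t*t)
    (htm : t ≤ m) (hmM : m ≤ n - k) (hgap : 2*((n-k)-m)*t ≤ (n-k) - t) :
    1/(5*(n.choose k:ℝ)) ≤
      ∑ i ∈ range (m+1), ((k+i).choose k : ℝ)⁻¹ * p^(k+i) * (1-p)^(n-(k+i)) * (m.choose i) := by
  have hq0 : (0:ℝ) < 1 - p := by linarith
  have hnk : (0:ℝ) < (n.choose k : ℝ) := by
    exact_mod_cast Nat.choose_pos (by omega : k ≤ n)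
  have hterm : ∀ i ∈ range (t+1),
      Bw n p (k+i) * (1/(2*(n.choose k:ℝ)))
        ≤ ((k+i).choose k : ℝ)⁻¹ * p^(k+i) * (1-p)^(n-(k+i)) * (m.choose i) := by
    intro i hi
    rw [mem_range] at hi
    have hkin : k + i ≤ n := by omega
    have h1 : (0:ℝ) < ((k+i).choose k : ℝ) := by
      exact_mod_cast Nat.choose_pos (by omega : k ≤ k+i)
    have hid : (n.choose (k+i) : ℝ) * ((k+i).choose k) = (n.choose k) * ((n-k).choose i) := by
      have := Nat.choose_mul (n := n) (k := k+i) (s := k) (by omega)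
      rw [show k + i - k = i by omega] at this
      exact_mod_cast congrArg (Nat.cast (R := ℝ)) this
    have h3 : ((n-k).choose i : ℝ) ≤ 2*(m.choose i) :=
      choose_ratio hmM htm hgap i (by omega)
    have h4 : (n.choose (k+i) : ℝ)/(2*(n.choose k)) ≤ (m.choose i : ℝ) / ((k+i).choose k) := by
      rw [div_le_div_iff₀ (by positivity) h1]
      calc (n.choose (k+i):ℝ) * ((k+i).choose k) = (n.choose k) * ((n-k).choose i) := hid
        _ ≤ (n.choose k) * (2*(m.choose i)) := mul_le_mul_of_nonneg_left h3 hnk.le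
        _ = (m.choose i : ℝ) * (2*(n.choose k)) := by ring
    have e1 : ((k+i).choose k:ℝ)⁻¹ * p^(k+i) * (1-p)^(n-(k+i)) * (m.choose i)
        = (p^(k+i) * (1-p)^(n-(k+i))) * ((m.choose i : ℝ)/((k+i).choose k)) := by
      rw [div_eq_mul_inv]; ring
    have e2 : Bw n p (k+i) * (1/(2*(n.choose k:ℝ)))
        = (p^(k+i) * (1-p)^(n-(k+i))) * ((n.choose (k+i):ℝ)/(2*(n.choose k))) := by
      rw [Bw, div_eq_mul_inv, mul_inv]; ring
    rw [e1, e2]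
    exact mul_le_mul_of_nonneg_left h4 (by positivity)
  have hsub : ∑ i ∈ range (t+1),
      ((k+i).choose k : ℝ)⁻¹ * p^(k+i) * (1-p)^(n-(k+i)) * (m.choose i)
      ≤ ∑ i ∈ range (m+1),
      ((k+i).choose k : ℝ)⁻¹ * p^(k+i) * (1-p)^(n-(k+i)) * (m.choose i) := by
    apply Finset.sum_le_sum_of_subset_of_nonneg
    · exact Finset.range_subset_range.mpr (by omega)
    · intro i _ _
      have h1 : (0:ℝ) < ((k+i).choose k : ℝ) := by
        exact_mod_cast Nat.choose_pos (by omega : k ≤ k+i)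
      positivity
  have hSp := Splus_ge hp0 hp hk1 hk2 h2t hkt hCt ht2
  have hchain : 1/(5*(n.choose k:ℝ)) ≤ ∑ i ∈ range (t+1),
      ((k+i).choose k : ℝ)⁻¹ * p^(k+i) * (1-p)^(n-(k+i)) * (m.choose i) := by
    calc 1/(5*(n.choose k:ℝ)) = (2/5) * (1/(2*(n.choose k:ℝ))) := by
          field_simp
      _ ≤ (∑ i ∈ range (t+1), Bw n p (k+i)) * (1/(2*(n.choose k:ℝ))) := by
          apply mul_le_mul_of_nonneg_right hSp (by positivity)
      _ = ∑ i ∈ range (t+1), Bw n p (k+i) * (1/(2*(n.choose k:ℝ))) := by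
          rw [Finset.sum_mul]
      _ ≤ _ := Finset.sum_le_sum hterm
  linarith

/-- The "up" extrapolation of `f` (defined on `k`-subsets) to all subsets:
`g(x) = binom(|x|,k)⁻¹ ∑_{x' ⊆ x, |x'| = k} f(x')` for `|x| ≥ k`, else `0`. -/
noncomputable def upFn {n : ℕ} (k : ℕ) (f : Finset (Fin n) → ℝ)
    (x : Finset (Fin n)) : ℝ :=
  if k ≤ x.card then (x.card.choose k : ℝ)⁻¹ * ∑ x' ∈ x.powersetCard k, f x'
  else 0

/-- `V_w(g) = ∑_{x ⊆ [n] ∖ J} g(w,x) μ_p(w,x)`. -/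
noncomputable def Vwg {n : ℕ} (p : ℝ) (J w : Finset (Fin n))
    (g : Finset (Fin n) → ℝ) : ℝ :=
  ∑ x : Finset (Fin n),
    if Disjoint x J then
      g (w ∪ x) * p ^ (w.card + x.card) * (1 - p) ^ (n - w.card - x.card)
    else 0

/-- `V_w(f) = ∑_{x ⊆ [n] ∖ J, |x| = k - |w|} f(w,x) / binom(n,k)`. -/
noncomputable def Vwf {n : ℕ} (k : ℕ) (J w : Finset (Fin n))
    (f : Finset (Fin n) → ℝ) : ℝ :=
  ∑ x : Finset (Fin n),
    if Disjoint x J ∧ x.card + w.card = k then f (w ∪ x) / (n.choose k : ℝ)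
    else 0

/-! ### The combinatorial reduction -/

lemma reduce {n k : ℕ} (p : ℝ) (hp0 : 0 ≤ p) (hp1 : p ≤ 1)
    (J w : Finset (Fin n)) (hw : w ⊆ J) (hak : w.card ≤ k)
    (f : Finset (Fin n) → ℝ) (hf : ∀ s, s.card = k → 0 ≤ f s) :
    ∑ y ∈ univ.filter (fun y : Finset (Fin n) => Disjoint y J ∧ y.card + w.card = k),
      f (w ∪ y) *
        (∑ i ∈ range ((n - J.card - (k - w.card))+1),
          ((k+i).choose k : ℝ)⁻¹ * p^(k+i) * (1-p)^(n-(k+i)) *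
            ((n - J.card - (k - w.card)).choose i))
      ≤ Vwg p J w (upFn k f) := by
  have hq0 : (0:ℝ) ≤ 1 - p := by linarith
  set a := w.card with ha
  set c : ℕ → ℝ := fun s => ((a+s).choose k : ℝ)⁻¹ * p^(a+s) * (1-p)^(n-a-s) with hc
  have step1 : ∑ x ∈ univ.filter (fun x : Finset (Fin n) => Disjoint x J),
      (∑ y ∈ x.powersetCard (k-a), f (w ∪ y)) * c x.card ≤ Vwg p J w (upFn k f) := by
    rw [Vwg, ← Finset.sum_filter]
    apply Finset.sum_le_sum
    intro x hx
    rw [mem_filter] at hx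
    have hdxJ : Disjoint x J := hx.2
    have hdwx : Disjoint w x := (hdxJ.mono_right hw).symm
    have hcard : (w ∪ x).card = a + x.card := card_union_of_disjoint hdwx
    rcases le_or_gt k (a + x.card) with hbig | hsmall
    · have hup : upFn k f (w ∪ x) =
          ((a + x.card).choose k : ℝ)⁻¹ * ∑ x' ∈ (w ∪ x).powersetCard k, f x' := by
        rw [upFn, hcard, if_pos hbig]
      have hsum : ∑ y ∈ x.powersetCard (k-a), f (w ∪ y)
          ≤ ∑ x' ∈ (w ∪ x).powersetCard k, f x' := by
        have himg : ∑ y ∈ x.powersetCard (k-a), f (w ∪ y)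
            = ∑ x' ∈ (x.powersetCard (k-a)).image (fun y => w ∪ y), f x' := by
          rw [Finset.sum_image]
          intro y1 h1 y2 h2 he
          rw [mem_coe, mem_powersetCard] at h1 h2
          have e1 : (w ∪ y1) \ w = y1 :=
            union_sdiff_cancel_left ((hdwx.mono_right h1.1))
          have e2 : (w ∪ y2) \ w = y2 :=
            union_sdiff_cancel_left ((hdwx.mono_right h2.1))
          rw [← e1, ← e2, show w ∪ y1 = w ∪ y2 from he]
        rw [himg]
        apply Finset.sum_le_sum_of_subset_of_nonneg
        · intro x' hx'
          rw [mem_image] at hx'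
          obtain ⟨y, hy, rfl⟩ := hx'
          rw [mem_powersetCard] at hy ⊢
          constructor
          · exact union_subset_union_right hy.1
          · rw [card_union_of_disjoint (hdwx.mono_right hy.1), hy.2]
            omega
        · intro x' hx' _
          rw [mem_powersetCard] at hx'
          exact hf x' hx'.2
      calc (∑ y ∈ x.powersetCard (k-a), f (w ∪ y)) * c x.card
          ≤ (∑ x' ∈ (w ∪ x).powersetCard k, f x') * c x.card := by
            apply mul_le_mul_of_nonneg_right hsum
            rw [hc]
            positivity
        _ = upFn k f (w ∪ x) * p ^ (a + x.card) * (1 - p) ^ (n - a - x.card) := by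
            rw [hup, hc]; ring
    · have hemp : x.powersetCard (k-a) = ∅ := by
        rw [powersetCard_eq_empty]; omega
      rw [hemp]
      simp only [Finset.sum_empty, zero_mul]
      have hup : upFn k f (w ∪ x) = 0 := by
        rw [upFn, hcard, if_neg (by omega)]
      rw [hup]
      simp
  have step2 : ∑ x ∈ univ.filter (fun x : Finset (Fin n) => Disjoint x J),
      (∑ y ∈ x.powersetCard (k-a), f (w ∪ y)) * c x.card
      = ∑ y ∈ univ.filter (fun y : Finset (Fin n) => Disjoint y J ∧ y.card + a = k),
          ∑ x ∈ univ.filter (fun x : Finset (Fin n) => y ⊆ x ∧ Disjoint x J),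
            f (w ∪ y) * c x.card := by
    have e1 : ∀ x ∈ univ.filter (fun x : Finset (Fin n) => Disjoint x J),
        (∑ y ∈ x.powersetCard (k-a), f (w ∪ y)) * c x.card
          = ∑ y ∈ x.powersetCard (k-a), f (w ∪ y) * c x.card := by
      intro x _; rw [Finset.sum_mul]
    rw [Finset.sum_congr rfl e1]
    apply Finset.sum_comm'
    intro x y
    simp only [mem_filter, mem_univ, true_and, mem_powersetCard]
    constructor
    · rintro ⟨h1, h2, h3⟩
      refine ⟨⟨h2, h1⟩, ?_, ?_⟩
      · exact (h1.mono_left h2)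
      · omega
    · rintro ⟨⟨h2, h1⟩, h3, h4⟩
      exact ⟨h1, h2, by omega⟩
  have step3 : ∀ y ∈ univ.filter (fun y : Finset (Fin n) => Disjoint y J ∧ y.card + a = k),
      ∑ x ∈ univ.filter (fun x : Finset (Fin n) => y ⊆ x ∧ Disjoint x J), c x.card
        = ∑ i ∈ range ((n - J.card - (k - a))+1),
            ((k+i).choose k : ℝ)⁻¹ * p^(k+i) * (1-p)^(n-(k+i)) *
              ((n - J.card - (k - a)).choose i) := by
    intro y hy
    rw [mem_filter] at hy
    obtain ⟨-, hydJ, hyc⟩ := hy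
    set U : Finset (Fin n) := (univ \ J) \ y with hU
    have hyU : y ⊆ univ \ J := subset_sdiff.mpr ⟨subset_univ y, hydJ⟩
    have hUcard : U.card = n - J.card - (k - a) := by
      rw [hU, card_sdiff_of_subset hyU, card_sdiff_of_subset (subset_univ J), card_univ, Fintype.card_fin]
      omega
    have hbij : ∑ x ∈ univ.filter (fun x : Finset (Fin n) => y ⊆ x ∧ Disjoint x J), c x.card
        = ∑ z ∈ U.powerset, c ((k - a) + z.card) := by
      apply Finset.sum_nbij' (fun x => x \ y) (fun z => y ∪ z)
      · intro x hx
        rw [mem_filter] at hx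
        rw [mem_powerset, hU]
        apply subset_sdiff.mpr
        constructor
        · exact subset_sdiff.mpr ⟨subset_univ _, hx.2.2.mono_left (sdiff_subset)⟩
        · exact disjoint_sdiff_self_left
      · intro z hz
        rw [mem_powerset, hU] at hz
        rw [mem_filter]
        refine ⟨mem_univ _, subset_union_left, ?_⟩
        rw [disjoint_union_left]
        exact ⟨hydJ, ((subset_sdiff.mp (hz.trans sdiff_subset)).2)⟩
      · intro x hx
        rw [mem_filter] at hx
        exact union_sdiff_of_subset hx.2.1
      · intro z hz
        rw [mem_powerset, hU] at hz
        apply union_sdiff_cancel_left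
        exact (subset_sdiff.mp hz).2.symm
      · intro x hx
        rw [mem_filter] at hx
        congr 1
        have h1 := card_sdiff_of_subset hx.2.1
        have h2 := card_le_card hx.2.1
        omega
    rw [hbij]
    rw [Finset.powerset_card_biUnion, Finset.sum_biUnion (fun i _ j _ hij => Finset.pairwise_disjoint_powersetCard U hij)]
    rw [hUcard]
    apply Finset.sum_congr rfl
    intro i hi
    have e2 : ∀ z ∈ U.powersetCard i, c ((k-a) + z.card)
        = ((k+i).choose k : ℝ)⁻¹ * p^(k+i) * (1-p)^(n-(k+i)) := by
      intro z hz
      rw [mem_powersetCard] at hz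
      rw [hz.2]
      simp only [hc]
      have e3 : a + (k - a + i) = k + i := by omega
      have e4 : n - a - (k - a + i) = n - (k+i) := by omega
      rw [e3, e4]
    rw [Finset.sum_congr rfl e2, Finset.sum_const, card_powersetCard, hUcard,
      nsmul_eq_mul]
    ring
  have step4 : ∑ y ∈ univ.filter (fun y : Finset (Fin n) => Disjoint y J ∧ y.card + a = k),
      ∑ x ∈ univ.filter (fun x : Finset (Fin n) => y ⊆ x ∧ Disjoint x J),
        f (w ∪ y) * c x.card
      = ∑ y ∈ univ.filter (fun y : Finset (Fin n) => Disjoint y J ∧ y.card + a = k),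
          f (w ∪ y) * (∑ i ∈ range ((n - J.card - (k - a))+1),
            ((k+i).choose k : ℝ)⁻¹ * p^(k+i) * (1-p)^(n-(k+i)) *
              ((n - J.card - (k - a)).choose i)) := by
    apply Finset.sum_congr rfl
    intro y hy
    rw [← Finset.mul_sum, step3 y hy]
  calc ∑ y ∈ univ.filter (fun y : Finset (Fin n) => Disjoint y J ∧ y.card + w.card = k),
        f (w ∪ y) * (∑ i ∈ range ((n - J.card - (k - w.card))+1),
          ((k+i).choose k : ℝ)⁻¹ * p^(k+i) * (1-p)^(n-(k+i)) *
            ((n - J.card - (k - w.card)).choose i))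
      = ∑ x ∈ univ.filter (fun x : Finset (Fin n) => Disjoint x J),
          (∑ y ∈ x.powersetCard (k-a), f (w ∪ y)) * c x.card := by
        rw [step2, step4]
    _ ≤ Vwg p J w (upFn k f) := step1

/-- The Down Lemma: for sufficiently large `n` (depending on `p` and `|J|`),
`V_w(f) ≤ 5 V_w(g)`. -/
theorem stmt_17 (p : ℝ) (hp0 : 0 < p) (hp : p < 1 / 2) (jcard : ℕ) :
    ∃ N : ℕ, ∀ n : ℕ, N ≤ n →
      ∀ J : Finset (Fin n), J.card = jcard →
        ∀ w : Finset (Fin n), w ⊆ J →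
          ∀ f : Finset (Fin n) → ℝ,
            (∀ s : Finset (Fin n), s.card = ⌊p * n⌋₊ → f s ∈ Set.Icc (0:ℝ) 1) →
            Vwf ⌊p * n⌋₊ J w f ≤ 5 * Vwg p J w (upFn ⌊p * n⌋₊ f) := by
  have hq0 : (0:ℝ) < 1 - p := by linarith
  set C₀ : ℝ := 4/(p*(1-p)^2) with hC₀def
  have hC₀ : 0 < C₀ := by rw [hC₀def]; positivity
  set δ : ℝ := min (p/20) (1/(30*(C₀+1)*((jcard:ℝ)+1))) with hδdef
  have hδ0 : 0 < δ := by
    apply lt_min (by positivity)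
    positivity
  set X : ℝ := (1/δ)^2 + ((jcard:ℝ)+2)/p + 5/p + 4*(jcard:ℝ) + 1 with hXdef
  refine ⟨⌈X⌉₊ + 1, ?_⟩
  intro n hn J hJ w hw f hf
  -- basic real facts
  have hnX : X ≤ (n:ℝ) := by
    have h1 : ((⌈X⌉₊ + 1 : ℕ) : ℝ) ≤ (n:ℝ) := Nat.cast_le.mpr hn
    have h2 : X ≤ (⌈X⌉₊ : ℝ) := Nat.le_ceil X
    push_cast at h1
    linarith
  have hδn : (1/δ)^2 ≤ (n:ℝ) := by
    have h2 : (0:ℝ) ≤ ((jcard:ℝ)+2)/p := by positivity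
    have h3 : (0:ℝ) ≤ 5/p := by positivity
    have h4 : (0:ℝ) ≤ 4*(jcard:ℝ) := by positivity
    rw [hXdef] at hnX; linarith
  have hn5p : 5/p ≤ (n:ℝ) := by
    have h2 : (0:ℝ) ≤ ((jcard:ℝ)+2)/p := by positivity
    have h4 : (0:ℝ) ≤ 4*(jcard:ℝ) := by positivity
    have h5 : (0:ℝ) ≤ (1/δ)^2 := by positivity
    rw [hXdef] at hnX; linarith
  have hnj2 : ((jcard:ℝ)+2)/p ≤ (n:ℝ) := by
    have h3 : (0:ℝ) ≤ 5/p := by positivity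
    have h4 : (0:ℝ) ≤ 4*(jcard:ℝ) := by positivity
    have h5 : (0:ℝ) ≤ (1/δ)^2 := by positivity
    rw [hXdef] at hnX; linarith
  have hn4j : 4*(jcard:ℝ) ≤ (n:ℝ) := by
    have h2 : (0:ℝ) ≤ ((jcard:ℝ)+2)/p := by positivity
    have h3 : (0:ℝ) ≤ 5/p := by positivity
    have h5 : (0:ℝ) ≤ (1/δ)^2 := by positivity
    rw [hXdef] at hnX; linarith
  have hn1 : (1:ℝ) ≤ (n:ℝ) := by
    have h2 : (0:ℝ) ≤ ((jcard:ℝ)+2)/p := by positivity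
    have h3 : (0:ℝ) ≤ 5/p := by positivity
    have h4 : (0:ℝ) ≤ 4*(jcard:ℝ) := by positivity
    have h5 : (0:ℝ) ≤ (1/δ)^2 := by positivity
    rw [hXdef] at hnX; linarith
  have hn0 : (0:ℝ) < (n:ℝ) := by linarith
  -- √n ≤ δ n
  have hsqrt : Real.sqrt n ≤ δ * n := by
    have h1 : (n:ℝ) ≤ (δ*n)^2 := by
      have h2 : 1 ≤ δ^2 * n := by
        rw [div_pow, one_pow, div_le_iff₀ (by positivity)] at hδn
        nlinarith
      nlinarith
    calc Real.sqrt n ≤ Real.sqrt ((δ*n)^2) := Real.sqrt_le_sqrt h1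
      _ = δ*n := Real.sqrt_sq (by positivity)
  -- t ≤ 3√n ≤ 3δn
  obtain ⟨t, htdef⟩ : ∃ t : ℕ, t = Nat.sqrt (3*n) + 1 := ⟨_, rfl⟩
  have htn : (t:ℝ) ≤ 3*(δ*n) := by
    have h1 : ((Nat.sqrt (3*n) : ℕ):ℝ) ≤ Real.sqrt (3*n) := by
      have h2 : (((Nat.sqrt (3*n)):ℕ):ℝ)^2 ≤ ((3*n:ℕ):ℝ) := by
        exact_mod_cast Nat.sqrt_le' (3*n)
      calc ((Nat.sqrt (3*n) : ℕ):ℝ) = Real.sqrt ((((Nat.sqrt (3*n)):ℕ):ℝ)^2) :=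
            (Real.sqrt_sq (by positivity)).symm
        _ ≤ Real.sqrt ((3*n:ℕ):ℝ) := Real.sqrt_le_sqrt h2
        _ = Real.sqrt (3*n) := by push_cast; ring_nf
    have h3 : Real.sqrt ((3:ℝ)*n) ≤ 2 * Real.sqrt n := by
      have h4 : ((3:ℝ)*n) ≤ (2*Real.sqrt n)^2 := by
        have h5 : (Real.sqrt n)^2 = n := Real.sq_sqrt (by positivity)
        nlinarith
      calc Real.sqrt ((3:ℝ)*n) ≤ Real.sqrt ((2*Real.sqrt n)^2) := Real.sqrt_le_sqrt h4
        _ = 2*Real.sqrt n := Real.sqrt_sq (by positivity)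
    have h6 : (1:ℝ) ≤ Real.sqrt n := by
      rw [show (1:ℝ) = Real.sqrt 1 by simp]
      exact Real.sqrt_le_sqrt hn1
    have h7 : (t:ℝ) = ((Nat.sqrt (3*n) : ℕ):ℝ) + 1 := by rw [htdef]; push_cast; ring
    rw [h7]
    nlinarith
  have hδ1 : δ ≤ p/20 := min_le_left _ _
  have hδ2 : δ ≤ 1/(30*(C₀+1)*((jcard:ℝ)+1)) := min_le_right _ _
  have hδ2' : δ * (30*(C₀+1)*((jcard:ℝ)+1)) ≤ 1 := by
    rw [le_div_iff₀ (by positivity)] at hδ2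
    linarith
  -- floor facts
  set k : ℕ := ⌊p * n⌋₊ with hkdef
  have hpn0 : (0:ℝ) ≤ p * n := by positivity
  have hk1 : (k:ℝ) ≤ p*n := Nat.floor_le hpn0
  have hk2 : p*n < (k:ℝ)+1 := Nat.lt_floor_add_one _
  have hpn5 : 5 ≤ p*(n:ℝ) := by
    rw [div_le_iff₀ hp0] at hn5p
    linarith
  have hpnj : (jcard:ℝ)+2 ≤ p*(n:ℝ) := by
    rw [div_le_iff₀ hp0] at hnj2
    linarith
  -- the numeric conditions
  have hN1 : jcard + 1 ≤ k := by
    have h1 : ((jcard + 1 : ℕ):ℝ) < ((k+1:ℕ):ℝ) := by push_cast; linarith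
    have := (Nat.cast_lt (α := ℝ)).mp h1
    omega
  have h6δn : 6*(δ*(n:ℝ)) ≤ (3/10)*(p*n) := by nlinarith
  have hN2 : 2*t + 2 ≤ k := by
    have h1 : ((2*t+2 : ℕ):ℝ) < ((k+1:ℕ):ℝ) := by
      push_cast
      nlinarith
    have := (Nat.cast_lt (α := ℝ)).mp h1
    omega
  have hδp : δ ≤ 1/40 := by nlinarith
  have hpn2 : p*(n:ℝ) ≤ (n:ℝ)/2 := by nlinarith
  have hN3 : k + t + jcard ≤ n := by
    have h1 : ((k + t + jcard : ℕ):ℝ) ≤ (n:ℝ) := by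
      push_cast
      have h2 : (jcard:ℝ) ≤ (n:ℝ)/4 := by linarith
      have h3 : (t:ℝ) ≤ 3*((n:ℝ)/40) := by nlinarith
      linarith
    exact_mod_cast h1
  have hN4 : 2*jcard*t + t + k ≤ n := by
    have h1 : ((2*jcard*t + t + k : ℕ):ℝ) ≤ (n:ℝ) := by
      push_cast
      have h2 : (2*(jcard:ℝ)+1)*(t:ℝ) ≤ (2*(jcard:ℝ)+1)*(3*(δ*n)) := by
        apply mul_le_mul_of_nonneg_left htn (by positivity)
      have h3 : (2*(jcard:ℝ)+1)*(3*(δ*n)) ≤ (n:ℝ)/5 := by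
        have h4 : δ*(30*(C₀+1)*((jcard:ℝ)+1)) ≤ 1 := hδ2'
        have h5 : (2*(jcard:ℝ)+1) ≤ 2*((jcard:ℝ)+1) := by linarith
        have h6 : (1:ℝ) ≤ C₀ + 1 := by linarith
        have h7 : δ*(30*((jcard:ℝ)+1)) ≤ 1 := by nlinarith
        nlinarith
      nlinarith
    exact_mod_cast h1
  have hCt : C₀ * (t:ℝ) ≤ (n:ℝ)/10 := by
    have h2 : C₀*(t:ℝ) ≤ C₀*(3*(δ*n)) := by
      apply mul_le_mul_of_nonneg_left htn hC₀.le
    have h3 : C₀*(3*(δ*n)) ≤ (n:ℝ)/10 := by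
      have h6 : (1:ℝ) ≤ (jcard:ℝ) + 1 := by
        have := Nat.cast_nonneg (α := ℝ) jcard
        linarith
      have h7 : δ*(30*(C₀+1)) ≤ 1 := by nlinarith
      nlinarith
    linarith
  have ht2 : 3*n ≤ t*t := by
    rw [htdef]
    have h := Nat.lt_succ_sqrt (3*n)
    simp only [Nat.succ_eq_add_one] at h
    omega
  -- derived conditions
  have haj : w.card ≤ jcard := by rw [← hJ]; exact card_le_card hw
  have hak : w.card ≤ k := by omega
  have hJc : J.card = jcard := hJ
  have htm : t ≤ n - J.card - (k - w.card) := by omega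
  have hmM : n - J.card - (k - w.card) ≤ n - k := by omega
  have hgap : 2*((n-k)-(n - J.card - (k - w.card)))*t ≤ (n-k) - t := by
    have h1 : 2*((n-k)-(n - J.card - (k - w.card))) ≤ 2*jcard := by omega
    have h3 : 2*((n-k)-(n - J.card - (k - w.card)))*t ≤ 2*jcard*t :=
      Nat.mul_le_mul h1 (le_refl t)
    omega
  have hkt : k + t ≤ n := by omega
  -- the weight bound
  have hW := W_ge (p := p) (n := n) (k := k) (t := t)
    (m := n - J.card - (k - w.card)) hp0 hp.le hk1 hk2
    hN2 hkt hCt ht2 htm hmM hgap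
  -- main chain
  have hf0 : ∀ s : Finset (Fin n), s.card = k → 0 ≤ f s := fun s hs => (hf s hs).1
  have hred := reduce (n := n) (k := k) p hp0.le (by linarith) J w hw hak f hf0
  rw [hJc] at hred
  have hnk0 : (0:ℝ) < (n.choose k : ℝ) := by
    exact_mod_cast Nat.choose_pos (by omega : k ≤ n)
  have hVwf : Vwf k J w f =
      ∑ y ∈ univ.filter (fun y : Finset (Fin n) => Disjoint y J ∧ y.card + w.card = k),
        f (w ∪ y) * (1/(n.choose k : ℝ)) := by
    rw [Vwf, ← Finset.sum_filter]
    apply Finset.sum_congr rfl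
    intro y _
    rw [div_eq_mul_inv, one_div]
  have hWb : 1/(n.choose k : ℝ) ≤ 5 * (∑ i ∈ range ((n - jcard - (k - w.card))+1),
      ((k+i).choose k : ℝ)⁻¹ * p^(k+i) * (1-p)^(n-(k+i)) *
        ((n - jcard - (k - w.card)).choose i)) := by
    have h1 : n - J.card - (k - w.card) = n - jcard - (k - w.card) := by omega
    rw [← h1]
    calc 1/(n.choose k : ℝ) = 5 * (1/(5*(n.choose k : ℝ))) := by
          field_simp
      _ ≤ 5 * _ := by linarith [hW]
  calc Vwf k J w f
      = ∑ y ∈ univ.filter (fun y : Finset (Fin n) => Disjoint y J ∧ y.card + w.card = k),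
          f (w ∪ y) * (1/(n.choose k : ℝ)) := hVwf
    _ ≤ ∑ y ∈ univ.filter (fun y : Finset (Fin n) => Disjoint y J ∧ y.card + w.card = k),
          f (w ∪ y) * (5 * (∑ i ∈ range ((n - jcard - (k - w.card))+1),
            ((k+i).choose k : ℝ)⁻¹ * p^(k+i) * (1-p)^(n-(k+i)) *
              ((n - jcard - (k - w.card)).choose i))) := by
        apply Finset.sum_le_sum
        intro y hy
        rw [mem_filter] at hy
        have hfy : 0 ≤ f (w ∪ y) := by
          apply hf0
          have hd : Disjoint w y := ((hy.2.1).mono_right hw).symm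
          rw [card_union_of_disjoint hd]
          omega
        exact mul_le_mul_of_nonneg_left hWb hfy
    _ = 5 * ∑ y ∈ univ.filter (fun y : Finset (Fin n) => Disjoint y J ∧ y.card + w.card = k),
          f (w ∪ y) * (∑ i ∈ range ((n - jcard - (k - w.card))+1),
            ((k+i).choose k : ℝ)⁻¹ * p^(k+i) * (1-p)^(n-(k+i)) *
              ((n - jcard - (k - w.card)).choose i)) := by
        conv_rhs => rw [Finset.mul_sum]
        apply Finset.sum_congr rfl
        intro y _
        ring
    _ ≤ 5 * Vwg p J w (upFn k f) := by linarith [hred]
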